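/- arXiv:2404.11258 — 3 statements merged into one kernel-verified Lean document; each statement's English description precedes it below -/
import Mathlib

section
/- With Θ(x1, x2) = arccos( ((1+e^{x1})^2 + (1+e^{x2})^2 - (e^{x1}+e^{x2})^2) / (2(1+e^{x1})(1+e^{x2})) ), the partial derivative satisfies ∂Θ/∂x1 = (1/(1+e^{x1})) · sqrt( e^{x1+x2} / (1 + e^{x1} + e^{x2}) ) for all real x1, x2. -/
open Real

/-- The angle function `Θ(x1, x2)`. -/
noncomputable def Theta (x1 x2 : ℝ) : ℝ :=
  Real.arccos (((1 + Real.exp x1) ^ 2 + (1 + Real.exp x2) ^ 2 -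
      (Real.exp x1 + Real.exp x2) ^ 2) /
    (2 * (1 + Real.exp x1) * (1 + Real.exp x2)))

theorem stmt_2 (x1 x2 : ℝ) :
    deriv (fun s => Theta s x2) x1 =
      (1 / (1 + Real.exp x1)) *
        Real.sqrt (Real.exp (x1 + x2) / (1 + Real.exp x1 + Real.exp x2)) := by
  have ha : (0:ℝ) < Real.exp x1 := Real.exp_pos x1
  have hb : (0:ℝ) < Real.exp x2 := Real.exp_pos x2
  set a := Real.exp x1 with ha'
  set b := Real.exp x2 with hb'
  have h1a : (0:ℝ) < 1 + a := by linarith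
  have h1b : (0:ℝ) < 1 + b := by linarith
  have hDne : 2 * (1 + a) * (1 + b) ≠ 0 := by positivity
  -- derivative of inner function
  have hu : HasDerivAt
      (fun s => ((1 + Real.exp s) ^ 2 + (1 + b) ^ 2 - (Real.exp s + b) ^ 2) /
        (2 * (1 + Real.exp s) * (1 + b)))
      (-(2 * a * b) / ((1 + b) * (1 + a) ^ 2)) x1 := by
    have he : HasDerivAt Real.exp a x1 := Real.hasDerivAt_exp x1
    have hN : HasDerivAt
        (fun s => (1 + Real.exp s) ^ 2 + (1 + b) ^ 2 - (Real.exp s + b) ^ 2)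
        (2 * (1 + a) * a - 2 * (a + b) * a) x1 := by
      have h1 : HasDerivAt (fun s => (1 + Real.exp s) ^ 2) (2 * (1 + a) * a) x1 := by
        have := ((he.const_add 1).fun_pow 2)
        refine this.congr_deriv ?_
        try simp [ha']
        try ring
      have h2 : HasDerivAt (fun s => (Real.exp s + b) ^ 2) (2 * (a + b) * a) x1 := by
        have := ((he.add_const b).fun_pow 2)
        refine this.congr_deriv ?_
        try simp [ha']
        try ring
      simpa using (h1.add_const ((1 + b) ^ 2)).fun_sub h2
    have hD : HasDerivAt (fun s => 2 * (1 + Real.exp s) * (1 + b))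
        (2 * a * (1 + b)) x1 := by
      have := ((he.const_add 1).const_mul 2).mul_const (1 + b)
      convert this using 1
      try ring
    have := hN.div hD hDne
    refine this.congr_deriv ?_
    rw [← ha']
    field_simp
    ring
  set v : ℝ := ((1 + a) ^ 2 + (1 + b) ^ 2 - (a + b) ^ 2) /
      (2 * (1 + a) * (1 + b)) with hv
  set T : ℝ := 1 + a + b with hT
  have hTpos : 0 < T := by simp [hT]; linarith
  have hv1 : 1 - v = 4 * (a * b) / (2 * (1 + a) * (1 + b)) := by
    rw [hv]; field_simp; ring
  have hv2 : 1 + v = 4 * T / (2 * (1 + a) * (1 + b)) := by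
    rw [hv, hT]; field_simp; ring
  have hvlt : v < 1 := by
    nlinarith [hv1, div_pos (by positivity : (0:ℝ) < 4 * (a * b))
      (by positivity : (0:ℝ) < 2 * (1 + a) * (1 + b))]
  have hvgt : -1 < v := by
    nlinarith [hv2, div_pos (by positivity : (0:ℝ) < 4 * T)
      (by positivity : (0:ℝ) < 2 * (1 + a) * (1 + b))]
  have harc := (Real.hasDerivAt_arccos (ne_of_gt hvgt) (ne_of_lt hvlt)).comp x1 hu
  have hderiv : deriv (fun s => Theta s x2) x1 =
      -(1 / Real.sqrt (1 - v ^ 2)) * (-(2 * a * b) / ((1 + b) * (1 + a) ^ 2)) := by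
    have : (fun s => Theta s x2) = (fun s =>
        Real.arccos (((1 + Real.exp s) ^ 2 + (1 + b) ^ 2 - (Real.exp s + b) ^ 2) /
          (2 * (1 + Real.exp s) * (1 + b)))) := by
      funext s; rfl
    rw [this]
    exact harc.deriv
  rw [hderiv]
  -- sqrt computations
  have habT : (0:ℝ) ≤ a * b * T := by positivity
  have hsq : Real.sqrt (1 - v ^ 2) =
      2 * Real.sqrt (a * b * T) / ((1 + a) * (1 + b)) := by
    have h1 : 1 - v ^ 2 = (2 * Real.sqrt (a * b * T) / ((1 + a) * (1 + b))) ^ 2 := by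
      have h2 : Real.sqrt (a * b * T) ^ 2 = a * b * T := Real.sq_sqrt habT
      have : 1 - v ^ 2 = (1 - v) * (1 + v) := by ring
      rw [this, hv1, hv2, div_pow, mul_pow, mul_pow, h2]
      field_simp
      ring
    rw [h1, Real.sqrt_sq (by positivity)]
  rw [hsq]
  have hexp : Real.exp (x1 + x2) = a * b := Real.exp_add x1 x2
  rw [hexp]
  have hmul : Real.sqrt (a * b * T) = Real.sqrt (a * b) * Real.sqrt T :=
    Real.sqrt_mul (by positivity) T
  have hdivs : Real.sqrt (a * b / T) = Real.sqrt (a * b) / Real.sqrt T :=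
    Real.sqrt_div (by positivity) T
  rw [hmul, hdivs]
  set p := Real.sqrt (a * b) with hp
  set q := Real.sqrt T with hq
  have hppos : 0 < p := Real.sqrt_pos.mpr (by positivity)
  have hqpos : 0 < q := Real.sqrt_pos.mpr hTpos
  have hp2 : p ^ 2 = a * b := Real.sq_sqrt (by positivity)
  field_simp
  linear_combination (-2 * q * (1 + b) * (1 + a) ^ 2 + (4*a*b*q+4*a*q+2*a^2*b*q+2*a^2*q+2*b*q+2*q-1)) * hp2
end

section
/- For all real x1, x2, the partial derivative of Θ(x1, x2) = arccos( ((1+e^{x1})^2 + (1+e^{x2})^2 - (e^{x1}+e^{x2})^2) / (2(1+e^{x1})(1+e^{x2})) ) with respect to x1 satisfies 0 < ∂Θ/∂x1 < 1. -/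
open Real

theorem stmt_3 (x1 x2 : ℝ) :
    0 < deriv (fun s => Theta s x2) x1 ∧ deriv (fun s => Theta s x2) x1 < 1 := by
  set b := Real.exp x2 with hb
  have hb0 : 0 < b := Real.exp_pos x2
  have hTheta : (fun s => Theta s x2) = fun s =>
      Real.arccos (1 - 2 * (Real.exp s * b) / ((1 + Real.exp s) * (1 + b))) := by
    funext s
    have hs : 0 < Real.exp s := Real.exp_pos s
    unfold Theta
    rw [← hb]
    congr 1
    field_simp
    ring
  rw [hTheta]
  set a := Real.exp x1 with ha
  have ha0 : 0 < a := Real.exp_pos x1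
  have hden : (0:ℝ) < (1 + a) * (1 + b) := by positivity
  set c : ℝ := 1 - 2 * (a * b) / ((1 + a) * (1 + b)) with hc
  -- bounds on c
  have ht0 : 0 < 2 * (a * b) / ((1 + a) * (1 + b)) := by positivity
  have ht1 : 2 * (a * b) / ((1 + a) * (1 + b)) < 2 := by
    rw [div_lt_iff₀ hden]
    nlinarith
  have hc1 : c < 1 := by rw [hc]; linarith
  have hcm1 : -1 < c := by rw [hc]; linarith
  -- derivative of inner function
  have hinner : HasDerivAt (fun s => 1 - 2 * (Real.exp s * b) / ((1 + Real.exp s) * (1 + b)))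
      (-(2 * (a * b) * (1 + b) / ((1 + a) * (1 + b)) ^ 2)) x1 := by
    have h1 : HasDerivAt (fun s : ℝ => 2 * (Real.exp s * b)) (2 * (a * b)) x1 := by
      have := (Real.hasDerivAt_exp x1).mul_const b |>.const_mul 2
      simpa [ha, mul_assoc] using this
    have h2 : HasDerivAt (fun s : ℝ => (1 + Real.exp s) * (1 + b)) (a * (1 + b)) x1 := by
      have := ((hasDerivAt_const x1 (1:ℝ)).add (Real.hasDerivAt_exp x1)).mul_const (1 + b)
      simpa [ha] using this
    have h3 := h1.div h2 (by positivity)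
    have h4 := (hasDerivAt_const x1 (1:ℝ)).sub h3
    refine h4.congr_deriv ?_
    rw [← ha]
    field_simp
    ring
  have hcd : HasDerivAt (fun s =>
      Real.arccos (1 - 2 * (Real.exp s * b) / ((1 + Real.exp s) * (1 + b))))
      (-(1 / Real.sqrt (1 - c ^ 2)) * (-(2 * (a * b) * (1 + b) / ((1 + a) * (1 + b)) ^ 2))) x1 := by
    exact (Real.hasDerivAt_arccos (by linarith) (by linarith)).comp x1 hinner
  rw [hcd.deriv]
  -- compute 1 - c^2
  have hsq : 1 - c ^ 2 = 4 * (a * b) * (1 + a + b) / ((1 + a) * (1 + b)) ^ 2 := by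
    rw [hc]
    field_simp
    ring
  have hsq0 : 0 < 1 - c ^ 2 := by rw [hsq]; positivity
  have hs0 : 0 < Real.sqrt (1 - c ^ 2) := Real.sqrt_pos.mpr hsq0
  set N : ℝ := 2 * (a * b) * (1 + b) / ((1 + a) * (1 + b)) ^ 2 with hN
  have hN0 : 0 < N := by rw [hN]; positivity
  have hD : -(1 / Real.sqrt (1 - c ^ 2)) * (-N) = N / Real.sqrt (1 - c ^ 2) := by
    field_simp
  rw [hD]
  constructor
  · positivity
  · rw [div_lt_one hs0]
    apply Real.lt_sqrt_of_sq_lt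
    rw [hsq, hN]
    rw [div_pow, div_lt_div_iff₀ (by positivity) (by positivity)]
    have key : a * b < (1 + a) ^ 2 * (1 + a + b) := by nlinarith
    nlinarith [sq_nonneg ((1 + a) * (1 + b)), mul_pos ha0 hb0, mul_pos hden hden,
      mul_lt_mul_of_pos_right key (by positivity : (0:ℝ) < 4 * (a * b) * (1 + b) ^ 2 * ((1 + a) * (1 + b)) ^ 2)]
end

section
/- Let G = (V, E) be a connected graph with uniformly bounded positive symmetric edge weights η (i.e., 0 < η_{vw} = η_{wv} ≤ C for all edges) and uniformly bounded vertex degrees, such that balls satisfy Vol(B_n(v)) ≤ C' n² for all n ≥ 1 (quadratic volume growth). Then every positive superharmonic function on (G, η) is constant. -/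
open Finset

noncomputable def stmtHn (n : ℕ) : ℝ := ∑ j ∈ range n, (1:ℝ)/(j+1)

lemma stmtHn_nonneg (n : ℕ) : 0 ≤ stmtHn n :=
  Finset.sum_nonneg fun i _ => by positivity

lemma stmtHn_mono : Monotone stmtHn := fun a b h =>
  Finset.sum_le_sum_of_subset_of_nonneg (Finset.range_subset_range.2 h) (fun i _ _ => by positivity)

lemma stmtHn_succ (n : ℕ) : stmtHn (n+1) = stmtHn n + 1/(n+1) := Finset.sum_range_succ _ _

lemma stmtHn_two_pow (m : ℕ) : 1 + (m:ℝ)/2 ≤ stmtHn (2^m) := by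
  induction m with
  | zero => simp [stmtHn]
  | succ m ih =>
    have hsplit : stmtHn (2^(m+1)) = stmtHn (2^m) + ∑ j ∈ Finset.Ico (2^m : ℕ) (2^(m+1)), (1:ℝ)/(j+1) := by
      rw [stmtHn, stmtHn, Finset.range_eq_Ico,
        ← Finset.sum_Ico_consecutive _ (Nat.zero_le _) (Nat.pow_le_pow_right (by norm_num) (Nat.le_succ m)), Finset.range_eq_Ico]
    have hlow : (1:ℝ)/2 ≤ ∑ j ∈ Finset.Ico (2^m : ℕ) (2^(m+1)), (1:ℝ)/(j+1) := by
      have h1 : ∀ j ∈ Finset.Ico (2^m : ℕ) (2^(m+1)), (1:ℝ)/(2^(m+1)) ≤ 1/(j+1) := by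
        intro j hj
        rw [Finset.mem_Ico] at hj
        apply one_div_le_one_div_of_le (by positivity)
        have : (j+1 : ℕ) ≤ 2^(m+1) := hj.2
        exact_mod_cast this
      calc (1:ℝ)/2 = (2^m : ℝ) * (1/(2^(m+1))) := by
            rw [pow_succ]; field_simp
        _ = ∑ _j ∈ Finset.Ico (2^m : ℕ) (2^(m+1)), (1:ℝ)/(2^(m+1)) := by
            rw [Finset.sum_const, Nat.card_Ico]
            have h2 : 2^(m+1) - 2^m = 2^m := by
              have := Nat.pow_succ 2 m; omega
            rw [h2, nsmul_eq_mul]; push_cast; ring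
        _ ≤ _ := Finset.sum_le_sum h1
    rw [hsplit]
    push_cast
    linarith

lemma stmt_key_id (a b p q : ℝ) (ha : 0 < a) (hb : 0 < b) :
    (p^2/a - q^2/b) * (a - b)
      = (p - q)^2 - (p * Real.sqrt (b/a) - q * Real.sqrt (a/b))^2 := by
  have h1 : Real.sqrt (b/a) ^ 2 = b/a := Real.sq_sqrt (by positivity)
  have h2 : Real.sqrt (a/b) ^ 2 = a/b := Real.sq_sqrt (by positivity)
  have h3 : Real.sqrt (b/a) * Real.sqrt (a/b) = 1 := by
    rw [← Real.sqrt_mul (by positivity)]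
    rw [show b/a*(a/b) = 1 by field_simp]
    exact Real.sqrt_one
  have e1 : (p * Real.sqrt (b/a) - q * Real.sqrt (a/b))^2
      = p^2 * (Real.sqrt (b/a)^2) - 2*(p*q)*(Real.sqrt (b/a) * Real.sqrt (a/b))
        + q^2 * (Real.sqrt (a/b)^2) := by ring
  rw [e1, h1, h2, h3]
  field_simp
  ring

lemma stmt_sq_diff_sqrt (a b : ℝ) (ha : 0 < a) (hb : 0 < b) :
    (Real.sqrt (b/a) - Real.sqrt (a/b))^2 = (a-b)^2/(a*b) := by
  have h1 : Real.sqrt (b/a) ^ 2 = b/a := Real.sq_sqrt (by positivity)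
  have h2 : Real.sqrt (a/b) ^ 2 = a/b := Real.sq_sqrt (by positivity)
  have h3 : Real.sqrt (b/a) * Real.sqrt (a/b) = 1 := by
    rw [← Real.sqrt_mul (by positivity)]
    rw [show b/a*(a/b) = 1 by field_simp]
    exact Real.sqrt_one
  have e1 : (Real.sqrt (b/a) - Real.sqrt (a/b))^2
      = (Real.sqrt (b/a)^2) - 2*(Real.sqrt (b/a) * Real.sqrt (a/b))
        + (Real.sqrt (a/b)^2) := by ring
  rw [e1, h1, h2, h3]
  field_simp
  ring

section Graph
variable {V : Type*} [DecidableEq V] (G : SimpleGraph V) [DecidableRel G.Adj] [G.LocallyFinite]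

def stmtBall (x : V) : ℕ → Finset V
  | 0 => {x}
  | n+1 => stmtBall x n ∪ (stmtBall x n).biUnion (fun y => G.neighborFinset y)

lemma stmtBall_self (x : V) : ∀ n, x ∈ stmtBall G x n
  | 0 => Finset.mem_singleton_self x
  | n+1 => Finset.mem_union_left _ (stmtBall_self x n)

lemma stmtBall_of_walk (x : V) : ∀ (n : ℕ) (v : V) (q : G.Walk v x), q.length ≤ n → v ∈ stmtBall G x n := by
  intro n
  induction n with
  | zero =>
    intro v q hq
    have hnil : q.Nil := SimpleGraph.Walk.nil_iff_length_eq.mpr (Nat.le_zero.mp hq)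
    cases q with
    | nil => exact stmtBall_self G x 0
    | cons h p => simp at hnil
  | succ n ih =>
    intro v q hq
    cases q with
    | nil => exact stmtBall_self G x (n+1)
    | cons h p =>
      have hp : p.length ≤ n := by
        simpa [SimpleGraph.Walk.length_cons] using hq
      have hy := ih _ p hp
      refine Finset.mem_union_right _ ?_
      refine Finset.mem_biUnion.mpr ⟨_, hy, ?_⟩
      rw [SimpleGraph.mem_neighborFinset]
      exact h.symm

lemma stmtBall_mem_of_dist (hconn : G.Connected) (x v : V) (n : ℕ)
    (h : G.dist x v ≤ n) : v ∈ stmtBall G x n := by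
  obtain ⟨p, hp⟩ := hconn.exists_walk_length_eq_dist v x
  exact stmtBall_of_walk G x n v p (by rw [hp, SimpleGraph.dist_comm]; exact h)

lemma stmtBall_dist (hconn : G.Connected) (x : V) :
    ∀ (n : ℕ) (v : V), v ∈ stmtBall G x n → G.dist x v ≤ n := by
  intro n
  induction n with
  | zero =>
    intro v hv
    rw [stmtBall, Finset.mem_singleton] at hv
    subst hv
    simp [SimpleGraph.dist_self]
  | succ n ih =>
    intro v hv
    rw [stmtBall, Finset.mem_union] at hv
    rcases hv with hv | hv
    · exact (ih v hv).trans (Nat.le_succ n)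
    · obtain ⟨y, hy, hvy⟩ := Finset.mem_biUnion.mp hv
      rw [SimpleGraph.mem_neighborFinset] at hvy
      calc G.dist x v ≤ G.dist x y + G.dist y v := hconn.dist_triangle
        _ ≤ n + 1 := by
            have h1 : G.dist y v = 1 := SimpleGraph.dist_eq_one_iff_adj.mpr hvy
            have h2 := ih y hy
            omega

lemma stmt_swap_sum (F : Finset V) (h : V → V → ℝ)
    (h1 : ∀ v ∈ F, ∀ w ∈ G.neighborFinset v, w ∉ F → h v w = 0)
    (h2 : ∀ v ∈ F, ∀ w ∈ G.neighborFinset v, w ∉ F → h w v = 0) :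
    ∑ v ∈ F, ∑ w ∈ G.neighborFinset v, h v w = ∑ v ∈ F, ∑ w ∈ G.neighborFinset v, h w v := by
  have step : ∀ (h : V → V → ℝ), (∀ v ∈ F, ∀ w ∈ G.neighborFinset v, w ∉ F → h v w = 0) →
      ∑ v ∈ F, ∑ w ∈ G.neighborFinset v, h v w
        = ∑ v ∈ F, ∑ w ∈ F, if G.Adj v w then h v w else 0 := by
    intro h h1
    refine Finset.sum_congr rfl fun v hv => ?_
    have hsub : G.neighborFinset v ∩ F ⊆ G.neighborFinset v := Finset.inter_subset_left
    rw [← Finset.sum_subset hsub (fun w hw hw' => h1 v hv w hw (fun hwF => hw' (Finset.mem_inter.mpr ⟨hw, hwF⟩)))]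
    have hinter : G.neighborFinset v ∩ F = F.filter (fun w => G.Adj v w) := by
      ext w
      simp [Finset.mem_inter, Finset.mem_filter, SimpleGraph.mem_neighborFinset, and_comm]
    rw [hinter, Finset.sum_filter]
  rw [step h h1, step (fun v w => h w v) h2, Finset.sum_comm]
  refine Finset.sum_congr rfl fun w _ => Finset.sum_congr rfl fun v _ => ?_
  simp only [SimpleGraph.adj_comm]

end Graph

set_option maxHeartbeats 2000000 in
/-- Liouville theorem: on a connected weighted graph with uniformly bounded positive
symmetric edge weights, uniformly bounded degrees, and quadratic volume growth of balls,
every positive superharmonic function is constant. -/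
theorem stmt_11 {V : Type*} [DecidableEq V] (G : SimpleGraph V) [DecidableRel G.Adj]
    [G.LocallyFinite] (hconn : G.Connected)
    (η : V → V → ℝ) (C : ℝ) (hC : 0 < C)
    (hsymm : ∀ v w, η v w = η w v)
    (hpos : ∀ v w, G.Adj v w → 0 < η v w)
    (hbd : ∀ v w, G.Adj v w → η v w ≤ C)
    (D : ℕ) (hdeg : ∀ v, G.degree v ≤ D)
    (C' : ℝ) (hC' : 0 < C')
    (hvol : ∀ (v : V) (n : ℕ), 1 ≤ n → ∀ s : Finset V,
      (∀ w ∈ s, G.dist v w ≤ n) →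
      ∑ x ∈ s, ∑ w ∈ G.neighborFinset x, η x w ≤ C' * (n : ℝ) ^ 2)
    (u : V → ℝ) (hu : ∀ v, 0 < u v)
    (hsuper : ∀ v, ∑ w ∈ G.neighborFinset v, η v w * (u w - u v) ≤ 0) :
    ∀ v w, u v = u w := by
  suffices key : ∀ a b, G.Adj a b → u a = u b by
    intro v w
    obtain ⟨p⟩ := hconn v w
    induction p with
    | nil => rfl
    | cons h p ih => exact (key _ _ h).trans ih
  intro a b hab
  by_contra hne
  have hua := hu a
  have hub := hu b
  set δ : ℝ := η a b * ((u a - u b)^2/(u a * u b)) with hδdef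
  have hδ : 0 < δ := by
    apply mul_pos (hpos a b hab)
    apply div_pos
    · have hne' : u a - u b ≠ 0 := sub_ne_zero.mpr hne
      positivity
    · positivity
  obtain ⟨m, hm⟩ := exists_nat_gt (max 1 (48 * C' / δ))
  have hm1 : 1 ≤ m := by
    have h1 : (1:ℝ) < m := lt_of_le_of_lt (le_max_left _ _) hm
    exact_mod_cast h1.le
  have hmc : 48 * C' / δ < (m:ℝ) := lt_of_le_of_lt (le_max_right _ _) hm
  set R : ℕ := 2^m with hR
  set H : ℝ := stmtHn R with hHdef
  have hH : 1 + (m:ℝ)/2 ≤ H := stmtHn_two_pow m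
  have hHpos : 0 < H := lt_of_lt_of_le (by positivity) hH
  set d : V → ℕ := fun v => G.dist a v with hd
  set g : ℕ → ℝ := fun n => max 0 (1 - stmtHn (n-1)/H) with hg
  set φ : V → ℝ := fun v => g (d v) with hφ
  have hg0 : g 0 = 1 := by simp [hg, stmtHn]
  have hg1 : g 1 = 1 := by simp [hg, stmtHn]
  -- step estimate for g
  have hgstep : ∀ n : ℕ, 1 ≤ n → |g n - g (n+1)| ≤ 1/(n*H) := by
    intro n hn
    have hnn : (n-1)+1 = n := Nat.succ_pred_eq_of_pos hn
    have hcast : ((n-1:ℕ):ℝ) + 1 = (n:ℝ) := by exact_mod_cast congrArg (fun k : ℕ => (k:ℝ)) hnn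
    have hB : stmtHn n = stmtHn (n-1) + 1/n := by
      conv_lhs => rw [← hnn]
      rw [stmtHn_succ, hcast]
    have hAB : stmtHn (n-1) ≤ stmtHn n := stmtHn_mono (by omega)
    have hg1n : g (n+1) ≤ g n := by
      simp only [hg, Nat.add_sub_cancel]
      apply max_le_max le_rfl
      gcongr
    have hupper : g n ≤ g (n+1) + 1/(n*H) := by
      simp only [hg, Nat.add_sub_cancel]
      have hkey : (1 : ℝ) - stmtHn (n-1)/H = (1 - stmtHn n/H) + 1/(n*H) := by
        rw [hB]
        have hn0 : ((n:ℝ)) ≠ 0 := by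
          have : (0:ℝ) < n := by exact_mod_cast hn
          linarith
        field_simp
        ring
      apply max_le
      · have h1 : (0:ℝ) ≤ max 0 (1 - stmtHn n/H) := le_max_left _ _
        have h2 : (0:ℝ) ≤ 1/(n*H) := by
          have : (0:ℝ) < n := by exact_mod_cast hn
          positivity
        linarith
      · rw [hkey]
        exact add_le_add (le_max_right _ _) le_rfl
    rw [abs_of_nonneg (sub_nonneg.mpr hg1n)]
    linarith
  have hgzero : ∀ n : ℕ, R+1 ≤ n → g n = 0 := by
    intro n hn
    have h1 : H ≤ stmtHn (n-1) := by
      rw [hHdef]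
      exact stmtHn_mono (by omega)
    have h2 : (1:ℝ) ≤ stmtHn (n-1)/H := (one_le_div hHpos).mpr h1
    simp only [hg]
    exact max_eq_left (by linarith)
  -- gradient estimates
  have hdist1 : ∀ v w : V, G.Adj v w → d w ≤ d v + 1 ∧ d v ≤ d w + 1 := by
    intro v w hvw
    constructor
    · calc d w ≤ d v + G.dist v w := hconn.dist_triangle
        _ = d v + 1 := by rw [SimpleGraph.dist_eq_one_iff_adj.mpr hvw]
    · calc d v ≤ d w + G.dist w v := hconn.dist_triangle
        _ = d w + 1 := by rw [SimpleGraph.dist_eq_one_iff_adj.mpr hvw.symm]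
  have hgrad : ∀ v w : V, G.Adj v w → ∀ n : ℕ, 1 ≤ n → (n = 1 ∨ n + 1 ≤ d v) →
      |φ v - φ w| ≤ 1/(n*H) := by
    intro v w hvw n hn hcase
    have hn0 : (0:ℝ) < n := by exact_mod_cast hn
    have hnH : (0:ℝ) ≤ 1/(n*H) := by positivity
    obtain ⟨h1, h2⟩ := hdist1 v w hvw
    have hstep' : ∀ k : ℕ, n ≤ k → |g k - g (k+1)| ≤ 1/(n*H) := by
      intro k hk
      refine (hgstep k (hn.trans hk)).trans ?_
      have hkn : (n:ℝ)*H ≤ (k:ℝ)*H := by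
        have hc : (n:ℝ) ≤ k := by exact_mod_cast hk
        nlinarith
      exact one_div_le_one_div_of_le (by positivity) hkn
    rcases show d w = d v ∨ d w = d v + 1 ∨ d v = d w + 1 by omega with h | h | h
    · simpa [hφ, h] using hnH
    · rcases hcase with rfl | hge
      · by_cases hdv : 1 ≤ d v
        · simpa [hφ, h] using hstep' (d v) hdv
        · have hdv0 : d v = 0 := by omega
          simpa [hφ, h, hdv0, hg0, hg1] using hnH
      · simpa [hφ, h] using hstep' (d v) (by omega)
    · rcases hcase with rfl | hge
      · by_cases hdw : 1 ≤ d w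
        · have hh := hstep' (d w) hdw
          rw [abs_sub_comm] at hh
          simpa [hφ, h] using hh
        · have hdw0 : d w = 0 := by omega
          simpa [hφ, h, hdw0, hg0, hg1] using hnH
      · have hh := hstep' (d w) (by omega)
        rw [abs_sub_comm] at hh
        simpa [hφ, h] using hh
  -- the finite ball
  set F : Finset V := stmtBall G a (R+2) with hF
  have hmemF : ∀ v, v ∈ F ↔ d v ≤ R+2 := fun v =>
    ⟨stmtBall_dist G hconn a (R+2) v, fun h => stmtBall_mem_of_dist G hconn a v (R+2) h⟩
  have hφ0 : ∀ v, R+1 ≤ d v → φ v = 0 := fun v h => hgzero (d v) h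
  have hnotF : ∀ v, v ∉ F → R+3 ≤ d v := by
    intro v hv
    by_contra hlt
    exact hv ((hmemF v).mpr (by omega))
  set f : V → ℝ := fun v => (φ v)^2 / u v with hf
  have hf0 : ∀ v, 0 ≤ f v := fun v => by
    have := hu v
    simp only [hf]
    positivity
  have hfz : ∀ v, R+1 ≤ d v → f v = 0 := by
    intro v h
    simp [hf, hφ0 v h]
  have hsup' : ∀ v, 0 ≤ ∑ w ∈ G.neighborFinset v, η v w * (u v - u w) := by
    intro v
    have h := hsuper v
    have heq : ∑ w ∈ G.neighborFinset v, η v w * (u v - u w)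
        = - ∑ w ∈ G.neighborFinset v, η v w * (u w - u v) := by
      rw [← Finset.sum_neg_distrib]
      exact Finset.sum_congr rfl fun w _ => by ring
    rw [heq]
    linarith
  have hT1 : 0 ≤ ∑ v ∈ F, ∑ w ∈ G.neighborFinset v, η v w * (f v * (u v - u w)) := by
    apply Finset.sum_nonneg
    intro v _
    have heq : ∑ w ∈ G.neighborFinset v, η v w * (f v * (u v - u w))
        = f v * ∑ w ∈ G.neighborFinset v, η v w * (u v - u w) := by
      rw [Finset.mul_sum]
      exact Finset.sum_congr rfl fun w _ => by ring
    rw [heq]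
    exact mul_nonneg (hf0 v) (hsup' v)
  have hT2 : ∑ v ∈ F, ∑ w ∈ G.neighborFinset v, η v w * (f w * (u v - u w)) ≤ 0 := by
    have hswap := stmt_swap_sum G F (fun v w => η v w * (f w * (u v - u w)))
      (by
        intro v hv w hw hwF
        have h3 := hnotF w hwF
        show η v w * (f w * (u v - u w)) = 0
        rw [hfz w (by omega)]
        ring)
      (by
        intro v hv w hw hwF
        have h3 := hnotF w hwF
        have hdw := (hdist1 v w ((SimpleGraph.mem_neighborFinset _ _ _).mp hw)).1
        show η w v * (f v * (u w - u v)) = 0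
        rw [hfz v (by omega)]
        ring)
    rw [hswap]
    calc ∑ v ∈ F, ∑ w ∈ G.neighborFinset v, η w v * (f v * (u w - u v))
        = ∑ v ∈ F, f v * ∑ w ∈ G.neighborFinset v, η v w * (u w - u v) := by
          refine Finset.sum_congr rfl fun v _ => ?_
          rw [Finset.mul_sum]
          refine Finset.sum_congr rfl fun w _ => ?_
          rw [hsymm w v]
          ring
      _ ≤ 0 := Finset.sum_nonpos fun v _ =>
          mul_nonpos_iff.mpr (Or.inl ⟨hf0 v, hsuper v⟩)
  set E := ∑ v ∈ F, ∑ w ∈ G.neighborFinset v, η v w * (φ v - φ w)^2 with hE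
  set Q := ∑ v ∈ F, ∑ w ∈ G.neighborFinset v,
      η v w * (φ v * Real.sqrt (u w/u v) - φ w * Real.sqrt (u v/u w))^2 with hQ
  have hQE : Q ≤ E := by
    have hTsum : ∑ v ∈ F, ∑ w ∈ G.neighborFinset v, η v w * ((f v - f w) * (u v - u w)) = E - Q := by
      rw [hE, hQ, ← Finset.sum_sub_distrib]
      refine Finset.sum_congr rfl fun v _ => ?_
      rw [← Finset.sum_sub_distrib]
      refine Finset.sum_congr rfl fun w _ => ?_
      have hid := stmt_key_id (u v) (u w) (φ v) (φ w) (hu v) (hu w)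
      have hfv : (f v - f w) * (u v - u w) = ((φ v)^2/u v - (φ w)^2/u w) * (u v - u w) := by
        simp only [hf]
      rw [hfv, hid]
      ring
    have hsplit : ∑ v ∈ F, ∑ w ∈ G.neighborFinset v, η v w * ((f v - f w) * (u v - u w))
        = (∑ v ∈ F, ∑ w ∈ G.neighborFinset v, η v w * (f v * (u v - u w)))
          - ∑ v ∈ F, ∑ w ∈ G.neighborFinset v, η v w * (f w * (u v - u w)) := by
      rw [← Finset.sum_sub_distrib]
      refine Finset.sum_congr rfl fun v _ => ?_
      rw [← Finset.sum_sub_distrib]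
      exact Finset.sum_congr rfl fun w _ => by ring
    have hTpos : (0:ℝ) ≤ E - Q := by
      rw [← hTsum, hsplit]
      linarith
    linarith
  -- lower bound on Q
  have haF : a ∈ F := (hmemF a).mpr (by simp [hd, SimpleGraph.dist_self])
  have hbN : b ∈ G.neighborFinset a := (SimpleGraph.mem_neighborFinset _ _ _).mpr hab
  have hδQ : δ ≤ Q := by
    have hφa : φ a = 1 := by
      have hda : d a = 0 := by simp [hd, SimpleGraph.dist_self]
      simp only [hφ, hda, hg0]
    have hφb : φ b = 1 := by
      have hdb : d b = 1 := by
        simp only [hd]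
        exact SimpleGraph.dist_eq_one_iff_adj.mpr hab
      simp only [hφ, hdb, hg1]
    have hterm : δ = η a b * (φ a * Real.sqrt (u b/u a) - φ b * Real.sqrt (u a/u b))^2 := by
      rw [hφa, hφb, one_mul, one_mul, stmt_sq_diff_sqrt (u a) (u b) hua hub, hδdef]
    rw [hterm, hQ]
    have hnn : ∀ v, ∀ w ∈ G.neighborFinset v,
        0 ≤ η v w * (φ v * Real.sqrt (u w/u v) - φ w * Real.sqrt (u v/u w))^2 := by
      intro v w hw
      exact mul_nonneg (hpos v w ((SimpleGraph.mem_neighborFinset _ _ _).mp hw)).le (sq_nonneg _)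
    calc η a b * (φ a * Real.sqrt (u b/u a) - φ b * Real.sqrt (u a/u b))^2
        ≤ ∑ w ∈ G.neighborFinset a, η a w * (φ a * Real.sqrt (u w/u a) - φ w * Real.sqrt (u a/u w))^2 :=
          Finset.single_le_sum (fun w hw => hnn a w hw) hbN
      _ ≤ ∑ v ∈ F, ∑ w ∈ G.neighborFinset v,
            η v w * (φ v * Real.sqrt (u w/u v) - φ w * Real.sqrt (u v/u w))^2 :=
          Finset.single_le_sum
            (fun v _ => Finset.sum_nonneg (fun w hw => hnn v w hw)) haF
  -- upper bound on E via dyadic shells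
  have hEbound : E ≤ (4*(m:ℝ)+8) * C' / H^2 := by
    set shell : ℕ → Finset V := fun k => F.filter (fun v => d v ≤ 2^k ∧ (k = 0 ∨ 2^(k-1) < d v)) with hshell
    have hcover : F ⊆ (Finset.range (m+2)).biUnion shell := by
      intro v hv
      have hdv : d v ≤ R + 2 := (hmemF v).mp hv
      have hex : ∃ k, d v ≤ 2^k := by
        refine ⟨m+1, ?_⟩
        have h2m : 2 ≤ 2^m := by
          calc 2 = 2^1 := (pow_one 2).symm
            _ ≤ 2^m := Nat.pow_le_pow_right (by norm_num) hm1
        have hps : 2^(m+1) = 2^m * 2 := pow_succ 2 m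
        omega
      have hk1 : d v ≤ 2^(Nat.find hex) := Nat.find_spec hex
      have hk2 : Nat.find hex ≤ m+1 := Nat.find_le (by
        have h2m : 2 ≤ 2^m := by
          calc 2 = 2^1 := (pow_one 2).symm
            _ ≤ 2^m := Nat.pow_le_pow_right (by norm_num) hm1
        have hps : 2^(m+1) = 2^m * 2 := pow_succ 2 m
        omega)
      refine Finset.mem_biUnion.mpr ⟨Nat.find hex, Finset.mem_range.mpr (by omega), ?_⟩
      simp only [hshell, Finset.mem_filter]
      refine ⟨hv, hk1, ?_⟩
      rcases Nat.eq_zero_or_pos (Nat.find hex) with h0 | hpos'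
      · exact Or.inl h0
      · right
        by_contra hle
        push_neg at hle
        exact (Nat.find_min hex (show Nat.find hex - 1 < Nat.find hex by omega)) hle
    have hdisjkey : ∀ k l : ℕ, k < l → ∀ v, v ∈ shell k → v ∈ shell l → False := by
      intro k l hkl v hk hl
      simp only [hshell, Finset.mem_filter] at hk hl
      obtain ⟨-, hk1, -⟩ := hk
      obtain ⟨-, hl1, hl2⟩ := hl
      rcases hl2 with rfl | hl2
      · omega
      · have hkl1 : k ≤ l - 1 := by omega
        have hple : (2:ℕ)^k ≤ 2^(l-1) := Nat.pow_le_pow_right (by norm_num) hkl1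
        omega
    have hdisj : (↑(Finset.range (m+2)) : Set ℕ).PairwiseDisjoint shell := by
      intro k _ l _ hkl
      rw [Function.onFun, Finset.disjoint_left]
      intro v hv hv2
      rcases hkl.lt_or_gt with h | h
      · exact absurd hv2 (fun hh => hdisjkey k l h v hv hh)
      · exact absurd hv (fun hh => hdisjkey l k h v hv2 hh)
    have htnonneg : ∀ v, 0 ≤ ∑ w ∈ G.neighborFinset v, η v w * (φ v - φ w)^2 :=
      fun v => Finset.sum_nonneg fun w hw =>
        mul_nonneg (hpos v w ((SimpleGraph.mem_neighborFinset _ _ _).mp hw)).le (sq_nonneg _)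
    have hE1 : E ≤ ∑ k ∈ Finset.range (m+2), ∑ v ∈ shell k,
        ∑ w ∈ G.neighborFinset v, η v w * (φ v - φ w)^2 := by
      rw [hE, ← Finset.sum_biUnion hdisj]
      exact Finset.sum_le_sum_of_subset_of_nonneg hcover (fun v _ _ => htnonneg v)
    have hshellbound : ∀ k ∈ Finset.range (m+2),
        ∑ v ∈ shell k, ∑ w ∈ G.neighborFinset v, η v w * (φ v - φ w)^2 ≤ 4*C'/H^2 := by
      intro k _
      have key2 : ∀ n : ℕ, 1 ≤ n → (2:ℝ)^k ≤ 2*n → 1/((n:ℝ)*H) ≤ 2/((2:ℝ)^k*H) := by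
        intro n hn hkn
        have hn0 : (0:ℝ) < n := by exact_mod_cast hn
        rw [div_le_div_iff₀ (mul_pos hn0 hHpos) (mul_pos (by positivity) hHpos)]
        nlinarith [hHpos]
      have hgb : ∀ v ∈ shell k, ∀ w ∈ G.neighborFinset v, (φ v - φ w)^2 ≤ (2/((2:ℝ)^k * H))^2 := by
        intro v hv w hw
        simp only [hshell, Finset.mem_filter] at hv
        obtain ⟨-, hv1, hv2⟩ := hv
        have hadj : G.Adj v w := (SimpleGraph.mem_neighborFinset _ _ _).mp hw
        have habs : |φ v - φ w| ≤ 2/((2:ℝ)^k * H) := by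
          rcases hv2 with rfl | hv2
          · refine (hgrad v w hadj 1 le_rfl (Or.inl rfl)).trans ?_
            have := key2 1 le_rfl (by norm_num)
            simpa using this
          · have hk1 : 1 ≤ k := by
              by_contra hcon
              have hk0 : k = 0 := by omega
              subst hk0
              simp only [pow_zero] at hv1 hv2
              omega
            have hn1 : 1 ≤ 2^(k-1) := Nat.one_le_pow _ _ (by norm_num)
            refine (hgrad v w hadj (2^(k-1)) hn1 (Or.inr (by omega))).trans ?_
            refine key2 (2^(k-1)) hn1 ?_
            have hcast : ((2^(k-1) : ℕ):ℝ) = (2:ℝ)^(k-1) := by push_cast; ring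
            rw [hcast]
            have hpow : (2:ℝ)^k = (2:ℝ)^(k-1) * 2 := by
              rw [← pow_succ]
              congr 1
              omega
            rw [hpow]
            linarith
        calc (φ v - φ w)^2 = |φ v - φ w|^2 := (sq_abs _).symm
          _ ≤ (2/((2:ℝ)^k*H))^2 := pow_le_pow_left₀ (abs_nonneg _) habs 2
      have hvolk : ∑ v ∈ shell k, ∑ w ∈ G.neighborFinset v, η v w ≤ C' * ((2^k : ℕ):ℝ)^2 := by
        apply hvol a (2^k) (Nat.one_le_pow _ _ (by norm_num))
        intro w hw
        simp only [hshell, Finset.mem_filter] at hw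
        exact hw.2.1
      calc ∑ v ∈ shell k, ∑ w ∈ G.neighborFinset v, η v w * (φ v - φ w)^2
          ≤ ∑ v ∈ shell k, ∑ w ∈ G.neighborFinset v, η v w * (2/((2:ℝ)^k*H))^2 := by
            refine Finset.sum_le_sum fun v hv => Finset.sum_le_sum fun w hw => ?_
            exact mul_le_mul_of_nonneg_left (hgb v hv w hw)
              (hpos v w ((SimpleGraph.mem_neighborFinset _ _ _).mp hw)).le
        _ = (2/((2:ℝ)^k*H))^2 * ∑ v ∈ shell k, ∑ w ∈ G.neighborFinset v, η v w := by
            rw [Finset.mul_sum]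
            refine Finset.sum_congr rfl fun v _ => ?_
            rw [Finset.mul_sum]
            exact Finset.sum_congr rfl fun w _ => by ring
        _ ≤ (2/((2:ℝ)^k*H))^2 * (C' * ((2^k : ℕ):ℝ)^2) :=
            mul_le_mul_of_nonneg_left hvolk (by positivity)
        _ = 4*C'/H^2 := by
            have hcast : ((2^k : ℕ):ℝ) = (2:ℝ)^k := by push_cast; ring
            rw [hcast]
            have h2k : ((2:ℝ)^k) ≠ 0 := by positivity
            have hH0 : H ≠ 0 := ne_of_gt hHpos
            field_simp
            ring
    calc E ≤ ∑ k ∈ Finset.range (m+2), ∑ v ∈ shell k,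
          ∑ w ∈ G.neighborFinset v, η v w * (φ v - φ w)^2 := hE1
      _ ≤ ∑ _k ∈ Finset.range (m+2), 4*C'/H^2 := Finset.sum_le_sum hshellbound
      _ = ((m:ℝ)+2) * (4*C'/H^2) := by
          rw [Finset.sum_const, Finset.card_range, nsmul_eq_mul]
          push_cast
          ring
      _ = (4*(m:ℝ)+8)*C'/H^2 := by ring
  -- final contradiction
  have hm' : (1:ℝ) ≤ m := by exact_mod_cast hm1
  have h48 : 48*C' < δ * m := by
    rw [div_lt_iff₀ hδ] at hmc
    linarith
  have hH2 : (m:ℝ)/2 ≤ H := by linarith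
  have hH2' : (m:ℝ)^2/4 ≤ H^2 := by nlinarith
  have hm20 : (0:ℝ) < (m:ℝ)^2/4 := by nlinarith
  have h1 : (4*(m:ℝ)+8)*C'/H^2 ≤ (4*(m:ℝ)+8)*C'/((m:ℝ)^2/4) :=
    div_le_div_of_nonneg_left (by positivity) hm20 hH2'
  have h2 : (4*(m:ℝ)+8)*C'/((m:ℝ)^2/4) ≤ 48*C'/(m:ℝ) := by
    rw [div_le_div_iff₀ hm20 (by linarith)]
    have hkey : 0 ≤ 8*C'*(m:ℝ)*((m:ℝ)-1) :=
      mul_nonneg (mul_nonneg (by linarith) (by positivity)) (by linarith)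
    linarith
  have h3 : 48*C'/(m:ℝ) < δ := by
    rw [div_lt_iff₀ (by linarith)]
    nlinarith
  linarith
end
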